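/- arXiv:1602.07858 — 6 statements merged into one kernel-verified Lean document; each statement's English description precedes it below -/
import Mathlib

section
/- Let R be a commutative ring, n ≥ 1, and C ∈ R. Let M be the n × n matrix with M(i,i) = -1 for all i, M(i+1,i) = C for 1 ≤ i ≤ n-1, M(i,n) = -C for 1 ≤ i ≤ n-1, and M(n,n) = -1 - C (all other entries 0). Then det M = (-1)^n · ∑_{i=0}^{n} C^i. -/
lemma two_term_sum {ι M : Type*} [Fintype ι] [DecidableEq ι] [AddCommMonoid M]
    (f : ι → M) (a b : ι) (hab : a ≠ b) (h : ∀ c, c ≠ a → c ≠ b → f c = 0) :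
    ∑ c, f c = f a + f b := by
  rw [← Finset.sum_subset (Finset.subset_univ {a, b})
    (fun x _ hx => h x (fun h1 => hx (by simp [h1])) (fun h2 => hx (by simp [h2]))),
    Finset.sum_pair hab]

/-- Determinant of the matrix `M_{C,n}` with `-1` on the diagonal, `C` on the subdiagonal,
`-C` in the last column (and `-1 - C` at the bottom-right corner):
`det = (-1)^n ∑_{i=0}^n C^i`. -/
theorem stmt_2 {R : Type*} [CommRing R] (n : ℕ) (hn : 1 ≤ n) (C : R)
    (M : Matrix (Fin n) (Fin n) R)
    (hM : ∀ i j : Fin n,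
      M i j = (if i = j then -1 else 0) + (if (i : ℕ) = (j : ℕ) + 1 then C else 0)
        + (if (j : ℕ) = n - 1 then -C else 0)) :
    M.det = (-1) ^ n * ∑ i ∈ Finset.range (n + 1), C ^ i := by
  obtain ⟨m, rfl⟩ : ∃ m, n = m + 1 := ⟨n - 1, by omega⟩
  clear hn
  induction m with
  | zero =>
    rw [Matrix.det_fin_one, hM]
    simp [Finset.sum_range_succ]
    ring
  | succ k ih =>
    rw [Matrix.det_succ_row_zero]
    rw [two_term_sum _ 0 (Fin.last (k + 1)) (by simp [Fin.ext_iff])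
      (fun c hc0 hcl => by
        have h1 : (0 : Fin (k+2)) ≠ c := fun h => hc0 h.symm
        have h2 : (c : ℕ) ≠ k + 1 := fun h => hcl (Fin.ext (by simpa using h))
        rw [hM]
        simp [h1, h2])]
    have hminor1 : (M.submatrix Fin.succ (Fin.succAbove 0)).det
        = (-1) ^ (k + 1) * ∑ i ∈ Finset.range (k + 2), C ^ i := by
      apply ih
      intro i j
      simp only [Matrix.submatrix_apply, Fin.succAbove_zero]
      rw [hM]
      simp [Fin.succ_inj, Fin.val_succ]
    have hminor2 : (M.submatrix Fin.succ (Fin.last (k + 1)).succAbove).det = C ^ (k + 1) := by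
      rw [Fin.succAbove_last]
      have htri : (M.submatrix Fin.succ Fin.castSucc).BlockTriangular id := by
        intro i j hij
        simp only [id_eq] at hij
        rw [Matrix.submatrix_apply, hM]
        have h1 : (i : Fin (k+1)).succ ≠ j.castSucc := by
          simp [Fin.ext_iff]; omega
        have h2 : ((i : Fin (k+1)).succ : ℕ) ≠ (j.castSucc : ℕ) + 1 := by
          simp; omega
        have h3 : ((j.castSucc : Fin (k+2)) : ℕ) ≠ (k + 2) - 1 := by
          simp; omega
        have h4 : (i : ℕ) ≠ (j : ℕ) := by omega
        have h5 : (j : ℕ) ≠ k + 1 := by omega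
        simp [h1, h2, h3, h4, h5]
      rw [Matrix.det_of_upperTriangular htri]
      have hdiag : ∀ i : Fin (k + 1),
          (M.submatrix Fin.succ Fin.castSucc) i i = C := by
        intro i
        rw [Matrix.submatrix_apply, hM]
        have h1 : (i : Fin (k+1)).succ ≠ i.castSucc := by simp [Fin.ext_iff]
        have h3 : ((i.castSucc : Fin (k+2)) : ℕ) ≠ (k + 2) - 1 := by simp; omega
        have hlt := i.isLt
        have h4 : (i : ℕ) ≠ k + 1 := by omega
        simp [h1, h3, h4]
      rw [Finset.prod_congr rfl (fun i _ => hdiag i)]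
      simp
    have hM00 : M 0 0 = -1 := by
      rw [hM]; simp
    have hM0l : M 0 (Fin.last (k + 1)) = -C := by
      rw [hM]
      simp [Fin.ext_iff, Fin.last]
    rw [hminor1, hminor2, hM00, hM0l]
    simp only [Finset.sum_range_succ, Fin.val_last, Fin.val_zero, pow_zero, one_mul]
    ring
end

section
/- Let R be a commutative ring, m ≥ 2, and C ∈ R. Let ℳ be the m × m matrix with ℳ(1,1) = C - 1, ℳ(1,m) = C, ℳ(i,i) = -1 for 2 ≤ i ≤ m-1, ℳ(i+1,i) = C for 2 ≤ i ≤ m-1, ℳ(i,m) = -C for 2 ≤ i ≤ m-1, ℳ(m,m) = -1 - C, and all other entries 0. Then det ℳ = (-1)^{m-1}(C^m - 1). -/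
open Finset

/-- Auxiliary matrix: diagonal `-1`, subdiagonal `C`, last column `-C`
(with `-1 - C` in the corner). -/
def auxA {R : Type*} [CommRing R] (n : ℕ) (C : R) : Matrix (Fin n) (Fin n) R :=
  fun i j =>
    if (j : ℕ) = n - 1 then (if (i : ℕ) = n - 1 then -1 - C else -C)
    else if i = j then -1
    else if (i : ℕ) = (j : ℕ) + 1 then C
    else 0

theorem auxA_det {R : Type*} [CommRing R] (C : R) :
    ∀ n : ℕ, (auxA (n + 1) C).det = (-1) ^ (n + 1) * ∑ k ∈ range (n + 2), C ^ k := by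
  intro n
  induction n with
  | zero =>
    rw [show (auxA 1 C) = !![-1 - C] by
      ext i j; fin_cases i; fin_cases j; simp [auxA]]
    simp [Finset.sum_range_succ]
    ring
  | succ n ih =>
    rw [Matrix.det_succ_row_zero]
    have h0 : ∀ j : Fin (n + 2),
        (auxA (n + 2) C) 0 j = if j = 0 then -1 else if j = Fin.last (n+1) then -C else 0 := by
      intro j
      simp only [auxA]
      rcases eq_or_ne j 0 with rfl | hj0
      · simp
      · rcases eq_or_ne j (Fin.last (n+1)) with rfl | hjl
        · simp
        · have h1 : (j : ℕ) ≠ n + 1 := by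
            intro h; exact hjl (Fin.ext h)
          have h2 : (0 : Fin (n+2)) ≠ j := fun h => hj0 h.symm
          have h3 : (0 : ℕ) ≠ (j : ℕ) + 1 := by omega
          simp [h1, h2, h3, hj0, hjl]
    -- split the sum at 0 and at last
    rw [Fin.sum_univ_succ]
    have hlast : ∀ j : Fin (n + 1), j ≠ Fin.last n →
        (-1 : R) ^ ((j.succ : Fin (n+2)) : ℕ) * (auxA (n + 2) C) 0 j.succ *
          ((auxA (n + 2) C).submatrix Fin.succ (Fin.succAbove j.succ)).det = 0 := by
      intro j hj
      have h1 : (j.succ : Fin (n+2)) ≠ 0 := Fin.succ_ne_zero j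
      have h2 : (j.succ : Fin (n+2)) ≠ Fin.last (n+1) := by
        intro h
        exact hj (Fin.ext (by
          have := congrArg Fin.val h
          simp [Fin.val_succ, Fin.val_last] at this ⊢
          omega))
      rw [h0, if_neg h1, if_neg h2]
      ring
    rw [Finset.sum_eq_single_of_mem (Fin.last n) (Finset.mem_univ _)
      (fun j _ hj => hlast j hj)]
    -- the two surviving minors
    have hsub0 : (auxA (n + 2) C).submatrix Fin.succ ((0 : Fin (n+2)).succAbove)
        = auxA (n + 1) C := by
      ext a b
      simp only [Matrix.submatrix_apply, Fin.succAbove_zero, auxA, Fin.val_succ]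
      have e1 : ((b : ℕ) + 1 = n + 2 - 1) ↔ ((b : ℕ) = n + 1 - 1) := by omega
      have e2 : ((a : ℕ) + 1 = n + 2 - 1) ↔ ((a : ℕ) = n + 1 - 1) := by omega
      have e3 : (a.succ = b.succ) ↔ (a = b) := Fin.succ_inj
      have e4 : ((a : ℕ) + 1 = (b : ℕ) + 1 + 1) ↔ ((a : ℕ) = (b : ℕ) + 1) := by omega
      simp only [e1, e2, e4]
      by_cases hb : (b : ℕ) = n + 1 - 1 <;> by_cases ha : (a : ℕ) = n + 1 - 1 <;>
        by_cases hab : a = b <;> simp [hb, ha, hab, Fin.succ_inj]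
    have hsubl :
        ((auxA (n + 2) C).submatrix Fin.succ ((Fin.last n).succ.succAbove)).det
          = C ^ (n + 1) := by
      have hdiag : ∀ a : Fin (n+1),
          ((auxA (n + 2) C).submatrix Fin.succ ((Fin.last n).succ.succAbove)) a a = C := by
        intro a
        have hl : (Fin.last n).succ = Fin.last (n + 1) := rfl
        simp only [Matrix.submatrix_apply, hl, Fin.succAbove_last, auxA,
          Fin.val_succ, Fin.coe_castSucc]
        have h2 : a.succ ≠ a.castSucc := by
          simp [Fin.ext_iff]
        simp [h2]
        intro h; omega
      rw [Matrix.det_of_upperTriangular, Finset.prod_congr rfl (fun a _ => hdiag a)]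
      · simp
      · intro i j hij
        have hl : (Fin.last n).succ = Fin.last (n + 1) := rfl
        simp only [Matrix.submatrix_apply, hl, Fin.succAbove_last, auxA,
          Fin.val_succ, Fin.coe_castSucc]
        have hij' : (j : ℕ) < (i : ℕ) := hij
        have h1 : (j : ℕ) ≠ n + 2 - 1 := by omega
        have h2 : i.succ ≠ j.castSucc := by
          simp [Fin.ext_iff]; omega
        have h3 : (i : ℕ) + 1 ≠ (j : ℕ) + 1 := by omega
        simp [h1, h2, h3]
        rw [if_neg (by omega), if_neg (by omega)]
    have hA00 : (auxA (n + 2) C) 0 0 = -1 := by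
      rw [h0]; simp
    have hA0l : (auxA (n + 2) C) 0 (Fin.last n).succ = -C := by
      have hl : (Fin.last n).succ = Fin.last (n + 1) := rfl
      rw [h0, hl]
      have hne : Fin.last (n + 1) ≠ 0 := by simp [Fin.ext_iff]
      rw [if_neg hne, if_pos rfl]
    rw [hA00, hA0l, hsub0, hsubl, ih]
    have hv : (((Fin.last n).succ : Fin (n+2)) : ℕ) = n + 1 := rfl
    rw [hv]
    rw [show (n + 3) = (n + 2) + 1 from rfl, Finset.sum_range_succ (fun k => C ^ k) (n + 2)]
    simp only [Fin.val_zero, pow_zero]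
    ring

/-- Determinant of the matrix `ℳ` (case ω = 0): `ℳ(1,1) = C - 1`, `ℳ(1,m) = C`,
diagonal `-1` for rows `2 ≤ i ≤ m-1`, subdiagonal `C` in columns `2 ≤ j ≤ m-1`,
last column `-C` for rows `2 ≤ i ≤ m-1`, `ℳ(m,m) = -1 - C`:
`det ℳ = (-1)^{m-1}(C^m - 1)`. -/
theorem stmt_3 {R : Type*} [CommRing R] (m : ℕ) (hm : 2 ≤ m) (C : R)
    (M : Matrix (Fin m) (Fin m) R)
    (hM : ∀ i j : Fin m, M i j =
      if (i : ℕ) = 0 ∧ (j : ℕ) = 0 then C - 1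
      else if (j : ℕ) = m - 1 then
        (if (i : ℕ) = 0 then C else if (i : ℕ) = m - 1 then -1 - C else -C)
      else if i = j then -1
      else if (i : ℕ) = (j : ℕ) + 1 ∧ 1 ≤ (j : ℕ) then C
      else 0) :
    M.det = (-1) ^ (m - 1) * (C ^ m - 1) := by
  obtain ⟨n, rfl⟩ : ∃ n, m = n + 2 := ⟨m - 2, by omega⟩
  rw [Matrix.det_succ_column_zero]
  have hcol : ∀ i : Fin (n + 2), M i 0 = if i = 0 then C - 1 else 0 := by
    intro i
    rw [hM]
    rcases eq_or_ne i 0 with rfl | hi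
    · simp
    · have h1 : (i : ℕ) ≠ 0 := fun h => hi (Fin.ext h)
      have h2 : (0 : ℕ) ≠ n + 2 - 1 := by omega
      have h3 : i ≠ 0 := hi
      have h4 : ¬((i : ℕ) = 0 + 1 ∧ 1 ≤ 0) := by omega
      simp [h1, h2, h3, h4, Fin.val_zero]
  rw [Finset.sum_eq_single_of_mem (0 : Fin (n+2)) (Finset.mem_univ _)
    (fun i _ hi => by rw [hcol, if_neg hi]; ring)]
  have hsub : M.submatrix ((0 : Fin (n+2)).succAbove) Fin.succ = auxA (n + 1) C := by
    ext a b
    rw [Matrix.submatrix_apply, Fin.succAbove_zero, hM]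
    simp only [auxA, Fin.val_succ]
    have h1 : ¬((a : ℕ) + 1 = 0 ∧ (b : ℕ) + 1 = 0) := by omega
    have e1 : ((b : ℕ) + 1 = n + 2 - 1) ↔ ((b : ℕ) = n + 1 - 1) := by omega
    have e2 : ((a : ℕ) + 1 = 0) ↔ False := iff_false_intro (by omega)
    have e3 : ((a : ℕ) + 1 = n + 2 - 1) ↔ ((a : ℕ) = n + 1 - 1) := by omega
    have e4 : (a.succ = b.succ) ↔ (a = b) := Fin.succ_inj
    have e5 : ((a : ℕ) + 1 = (b : ℕ) + 1 + 1 ∧ 1 ≤ (b : ℕ) + 1) ↔ ((a : ℕ) = (b : ℕ) + 1) := by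
      omega
    rw [if_neg h1]
    simp only [e1, e2, e3, e4, e5, if_false]
  rw [hcol, if_pos rfl, hsub, auxA_det]
  have : (C - 1) * ∑ k ∈ range (n + 2), C ^ k = C ^ (n + 2) - 1 := mul_geom_sum C (n + 2)
  have hg : ((-1 : R)) ^ ((0 : Fin (n+2)) : ℕ) = 1 := by simp
  rw [hg]
  calc 1 * (C - 1) * ((-1) ^ (n + 1) * ∑ k ∈ range (n + 2), C ^ k)
      = (-1 : R) ^ (n + 1) * ((C - 1) * ∑ k ∈ range (n + 2), C ^ k) := by ring
    _ = (-1) ^ (n + 2 - 1) * (C ^ (n + 2) - 1) := by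
        rw [this, show n + 2 - 1 = n + 1 from rfl]
end

section
/- Let R be a commutative ring, m ≥ 2, and C ∈ R. Let ℳ be the m × m matrix with ℳ(1,m) = C; ℳ(2,1) = -1 and ℳ(2,2) = -1; ℳ(i,i) = -1 and ℳ(i+1,i) = C for 3 ≤ i ≤ m-1 (and ℳ(3,2) = C); ℳ(i,m) = -C for 2 ≤ i ≤ m-1; ℳ(m,m) = -1 - C; all other entries 0. Then det ℳ = (-1)^m · C^{m-1}. -/
/-- Determinant of the matrix `ℳ` (case ω > 0): `ℳ(1,m) = C`; `ℳ(2,1) = ℳ(2,2) = -1`;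
diagonal `-1` and subdiagonal `C` in the middle; last column `-C` for rows `2 ≤ i ≤ m-1`;
`ℳ(m,m) = -1 - C`: `det ℳ = (-1)^m C^{m-1}`. -/
theorem stmt_4 {R : Type*} [CommRing R] (m : ℕ) (hm : 2 ≤ m) (C : R)
    (M : Matrix (Fin m) (Fin m) R)
    (hM : ∀ i j : Fin m, M i j =
      if (j : ℕ) = m - 1 then
        (if (i : ℕ) = 0 then C else if (i : ℕ) = m - 1 then -1 - C else -C)
      else if (i : ℕ) = 1 ∧ (j : ℕ) = 0 then -1
      else if i = j ∧ 1 ≤ (i : ℕ) then -1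
      else if (i : ℕ) = (j : ℕ) + 1 ∧ 1 ≤ (j : ℕ) then C
      else 0) :
    M.det = (-1) ^ m * C ^ (m - 1) := by
  obtain ⟨k, rfl⟩ : ∃ k, m = k + 2 := ⟨m - 2, by omega⟩
  rw [Matrix.det_succ_row_zero]
  rw [Finset.sum_eq_single (Fin.last (k+1))]
  · rw [Fin.succAbove_last]
    have h0 : M 0 (Fin.last (k+1)) = C := by
      rw [hM]; simp
    have hdet : (M.submatrix Fin.succ Fin.castSucc).det = -C^k := by
      rw [Matrix.det_of_upperTriangular]
      · have hd : ∀ i : Fin (k+1),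
            (M.submatrix Fin.succ Fin.castSucc) i i = if (i:ℕ) = 0 then -1 else C := by
          intro i
          simp only [Matrix.submatrix_apply]
          rw [hM]
          have hiv : (i:ℕ) < k + 1 := i.isLt
          have hfe : (i.succ = i.castSucc) ↔ False := by
            simp [Fin.ext_iff]
          have hc : ((i.castSucc : Fin (k+2)) : ℕ) = (i:ℕ) := rfl
          simp only [Fin.val_succ, hc, hfe, false_and, if_false, true_and]
          split_ifs with h1 h2 h3 h4 <;> first | rfl | omega
        calc (∏ i : Fin (k+1), (M.submatrix Fin.succ Fin.castSucc) i i)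
            = ∏ i : Fin (k+1), (if (i:ℕ) = 0 then -1 else C) := by
              exact Finset.prod_congr rfl fun i _ => hd i
          _ = -C^k := by
              rw [Fin.prod_univ_succ]
              simp
      · intro i j hij
        simp only [Matrix.submatrix_apply]
        rw [hM]
        have hjv : (j:ℕ) < k + 1 := j.isLt
        have hij' : (j:ℕ) < (i:ℕ) := hij
        have hfe : (i.succ = j.castSucc) ↔ False := by
          simp [Fin.ext_iff]; omega
        have hc : ((j.castSucc : Fin (k+2)) : ℕ) = (j:ℕ) := rfl
        simp only [Fin.val_succ, hc, hfe, false_and, if_false, true_and]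
        split_ifs with h1 h2 h3 <;> first | rfl | omega
    rw [h0, hdet]
    simp only [Fin.val_last, show k+2-1 = k+1 from rfl]
    ring
  · intro j _ hj
    have hjv : (j:ℕ) < k + 1 := by
      rcases lt_or_eq_of_le (Nat.lt_succ_iff.mp j.isLt) with h | h
      · exact h
      · exact absurd (Fin.ext h : j = Fin.last (k+1)) hj
    have : M 0 j = 0 := by
      rw [hM]
      have : ((0 : Fin (k+2)) : ℕ) = 0 := rfl
      split_ifs with h1 h2 h3 h4 <;>
        first | rfl | omega
    simp [this]
  · simp
end

section
/- Let p be a prime, d ≥ 1, and c ∈ ℤ_p^× with c^d ≠ 1; set ω = v_p(c^d - 1). Let G = ℤ/dℤ with generator b, and let π : ℤ_p[G] → ℤ/p^ωℤ be the ℤ_p-algebra homomorphism determined by π(b) = (c̄)^{-1}, where c̄ is the image of c in (ℤ/p^ωℤ)^× (this is well-defined since c^d ≡ 1 mod p^ω). Then the kernel of π is the ideal of ℤ_p[G] generated by c·b - 1. -/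
/-- The kernel of the ℤ_p-algebra map `π : ℤ_p[ℤ/dℤ] → ℤ/p^ωℤ` with `π(b) = c̄⁻¹`
(where `ω = v_p(c^d - 1)`) is the ideal generated by `c·b - 1`. -/
theorem stmt_11 (p : ℕ) [Fact p.Prime] (d : ℕ) (hd : 1 ≤ d)
    (c : ℤ_[p]ˣ) (hc : (c : ℤ_[p]) ^ d ≠ 1) (ω : ℕ)
    (hω : ((c : ℤ_[p]) ^ d - 1).valuation = (ω : ℤ))
    (cbar : ZMod (p ^ ω)) (hcbar : cbar = PadicInt.toZModPow ω (c : ℤ_[p]))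
    (hcu : IsUnit cbar)
    (π : MonoidAlgebra ℤ_[p] (Multiplicative (ZMod d)) →+* ZMod (p ^ ω))
    (hπ0 : ∀ r : ℤ_[p], π (MonoidAlgebra.single 1 r) = PadicInt.toZModPow ω r)
    (hπb : π (MonoidAlgebra.single (Multiplicative.ofAdd (1 : ZMod d)) 1)
      = ((hcu.unit⁻¹ : (ZMod (p ^ ω))ˣ) : ZMod (p ^ ω))) :
    RingHom.ker π = Ideal.span
      {MonoidAlgebra.single (Multiplicative.ofAdd (1 : ZMod d)) (c : ℤ_[p]) - 1} := by
  classical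
  haveI : NeZero d := ⟨Nat.one_le_iff_ne_zero.mp hd⟩
  set b : Multiplicative (ZMod d) := Multiplicative.ofAdd (1 : ZMod d) with hb
  set g : MonoidAlgebra ℤ_[p] (Multiplicative (ZMod d)) :=
    MonoidAlgebra.single b (c : ℤ_[p]) - 1 with hg
  set I : Ideal (MonoidAlgebra ℤ_[p] (Multiplicative (ZMod d))) := Ideal.span {g} with hI
  have hgdecomp : MonoidAlgebra.single b (c : ℤ_[p])
      = MonoidAlgebra.single (1 : Multiplicative (ZMod d)) (c : ℤ_[p])
        * MonoidAlgebra.single b 1 := by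
    rw [MonoidAlgebra.single_mul_single, one_mul, mul_one]
  have hπg : π g = 0 := by
    rw [hg, map_sub, map_one, hgdecomp, map_mul, hπ0, hπb, ← hcbar]
    rw [sub_eq_zero]
    have : cbar * ↑hcu.unit⁻¹ = ↑hcu.unit * ↑hcu.unit⁻¹ := by rw [IsUnit.unit_spec]
    rw [this, Units.mul_inv]
  have hsub : I ≤ RingHom.ker π := by
    rw [hI, Ideal.span_le, Set.singleton_subset_iff]
    exact hπg
  -- quotient setup
  set Q := MonoidAlgebra ℤ_[p] (Multiplicative (ZMod d)) ⧸ I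
  set mk : MonoidAlgebra ℤ_[p] (Multiplicative (ZMod d)) →+* Q := Ideal.Quotient.mk I
  have hmkg : mk (MonoidAlgebra.single b (c : ℤ_[p])) = 1 := by
    have : mk g = 0 := Ideal.Quotient.eq_zero_iff_mem.mpr (Ideal.subset_span rfl)
    rw [hg, map_sub, map_one, sub_eq_zero] at this
    exact this
  set B : Q := mk (MonoidAlgebra.single b 1) with hB
  set C : Q := mk (MonoidAlgebra.single (1 : Multiplicative (ZMod d)) (c : ℤ_[p])) with hC
  have hBC : C * B = 1 := by rw [hB, hC, ← map_mul, ← hgdecomp, hmkg]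
  have hBd : B ^ d = 1 := by
    rw [hB, ← map_pow, MonoidAlgebra.single_pow, one_pow]
    have hbd : b ^ d = 1 := by
      rw [hb, ← ofAdd_nsmul]
      simp
    rw [hbd, ← MonoidAlgebra.one_def, map_one]
  have hCpow : ∀ m : ℕ, C ^ m = mk (MonoidAlgebra.single 1 ((c : ℤ_[p]) ^ m)) := by
    intro m
    rw [hC, ← map_pow, MonoidAlgebra.single_pow, one_pow]
  have hBn : ∀ n : ℕ, B ^ n = C ^ (d * n - n) := by
    intro n
    have h1 : B ^ (d * n) = 1 := by rw [pow_mul, hBd, one_pow]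
    have h2 : C ^ (d * n) * B ^ (d * n) = 1 := by
      rw [← mul_pow, hBC, one_pow]
    have h3 : C ^ (d * n) = 1 := by rwa [h1, mul_one] at h2
    have h4 : d * n - n + n = d * n := by
      have : n ≤ d * n := Nat.le_mul_of_pos_left n (Nat.lt_of_lt_of_le Nat.zero_lt_one hd)
      omega
    have h5 : C ^ n * B ^ n = 1 := by rw [← mul_pow, hBC, one_pow]
    conv_lhs => rw [← one_mul (B ^ n), ← h3, ← h4, pow_add]
    rw [mul_assoc, h5, mul_one]
  -- every element is congruent to a "constant"
  have key : ∀ a : MonoidAlgebra ℤ_[p] (Multiplicative (ZMod d)),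
      ∃ r : ℤ_[p], mk a = mk (MonoidAlgebra.single 1 r) := by
    intro a
    induction a using MonoidAlgebra.induction with
    | zero => exact ⟨0, by simp⟩
    | single_add g0 r0 f hg0 hr0 ih =>
      obtain ⟨r, hr⟩ := ih
      set n : ℕ := (Multiplicative.toAdd g0).val with hn
      have hg0b : g0 = b ^ n := by
        rw [hb, ← ofAdd_nsmul]
        have hval : (n • (1 : ZMod d)) = Multiplicative.toAdd g0 := by
          rw [nsmul_eq_mul, mul_one, hn, ZMod.natCast_val, ZMod.cast_id]
        rw [hval, ofAdd_toAdd]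
      have hsingle : (MonoidAlgebra.single g0 r0 : MonoidAlgebra ℤ_[p] (Multiplicative (ZMod d)))
          = MonoidAlgebra.single (b ^ n) 1 * MonoidAlgebra.single 1 r0 := by
        rw [MonoidAlgebra.single_mul_single, mul_one, one_mul, hg0b]
      refine ⟨(c : ℤ_[p]) ^ (d * n - n) * r0 + r, ?_⟩
      have : mk (MonoidAlgebra.single g0 r0)
          = mk (MonoidAlgebra.single 1 ((c : ℤ_[p]) ^ (d * n - n) * r0)) := by
        rw [hsingle, map_mul]
        have hb' : mk (MonoidAlgebra.single (b ^ n) 1) = B ^ n := by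
          rw [hB, ← RingHom.map_pow]
          congr 1
          rw [MonoidAlgebra.single_pow, one_pow]
        rw [hb', hBn n, hCpow, ← map_mul, MonoidAlgebra.single_mul_single, one_mul]
      rw [map_add, this, hr, ← map_add, ← MonoidAlgebra.single_add]
  -- constants with zero image are in I
  have hconst : ∀ r : ℤ_[p], PadicInt.toZModPow ω r = 0 →
      (MonoidAlgebra.single (1 : Multiplicative (ZMod d)) r) ∈ I := by
    intro r hr
    have hmem : r ∈ Ideal.span {(p : ℤ_[p]) ^ ω} := by
      rw [← PadicInt.ker_toZModPow, RingHom.mem_ker]; exact hr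
    obtain ⟨s, hs⟩ := Ideal.mem_span_singleton'.mp hmem
    have hne : (c : ℤ_[p]) ^ d - 1 ≠ 0 := sub_ne_zero.mpr hc
    obtain ⟨u, hu⟩ : ∃ u : ℤ_[p]ˣ, ((c : ℤ_[p]) ^ d - 1) = ↑u * (p : ℤ_[p]) ^ ω := by
      refine ⟨PadicInt.unitCoeff hne, ?_⟩
      have hspec := PadicInt.unitCoeff_spec hne
      rw [show ((c : ℤ_[p]) ^ d - 1).valuation = ω by exact_mod_cast hω] at hspec
      simpa using hspec
    have hpω : ((u⁻¹ : ℤ_[p]ˣ) : ℤ_[p]) * ((c : ℤ_[p]) ^ d - 1) = (p : ℤ_[p]) ^ ω := by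
      rw [hu, ← mul_assoc, Units.inv_mul, one_mul]
    have hy : r = ((c : ℤ_[p]) ^ d - 1) * (((u⁻¹ : ℤ_[p]ˣ) : ℤ_[p]) * s) := by
      calc r = s * (p : ℤ_[p]) ^ ω := hs.symm
        _ = s * (((u⁻¹ : ℤ_[p]ˣ) : ℤ_[p]) * ((c : ℤ_[p]) ^ d - 1)) := by rw [hpω]
        _ = _ := by ring
    -- single 1 (c^d - 1) ∈ I
    have h1 : (MonoidAlgebra.single (1 : Multiplicative (ZMod d)) ((c : ℤ_[p]) ^ d - 1)) ∈ I := by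
      have hbd : b ^ d = 1 := by
        rw [hb, ← ofAdd_nsmul]; simp
      have : (MonoidAlgebra.single (1 : Multiplicative (ZMod d)) ((c : ℤ_[p]) ^ d - 1))
          = (MonoidAlgebra.single b (c : ℤ_[p])) ^ d - 1 := by
        rw [MonoidAlgebra.single_pow, hbd, MonoidAlgebra.one_def]
        exact MonoidAlgebra.single_sub _ _ _
      rw [this]
      have hdvd : g ∣ (MonoidAlgebra.single b (c : ℤ_[p])) ^ d - 1 := by
        rw [hg]; exact sub_one_dvd_pow_sub_one _ d
      exact Ideal.mem_span_singleton.mpr hdvd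
    have : (MonoidAlgebra.single (1 : Multiplicative (ZMod d)) r)
        = (MonoidAlgebra.single (1 : Multiplicative (ZMod d)) ((c : ℤ_[p]) ^ d - 1))
          * (MonoidAlgebra.single (1 : Multiplicative (ZMod d))
              (((u⁻¹ : ℤ_[p]ˣ) : ℤ_[p]) * s)) := by
      rw [MonoidAlgebra.single_mul_single, one_mul, ← hy]
    rw [this]
    exact Ideal.mul_mem_right _ _ h1
  -- conclude
  apply le_antisymm _ hsub
  intro x hx
  obtain ⟨r, hr⟩ := key x
  have hxr : x - MonoidAlgebra.single 1 r ∈ I := by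
    rw [← Ideal.Quotient.eq_zero_iff_mem, map_sub, sub_eq_zero]
    exact hr
  have hπr : π (MonoidAlgebra.single (1 : Multiplicative (ZMod d)) r) = 0 := by
    have := hsub hxr
    rw [RingHom.mem_ker, map_sub, sub_eq_zero] at this
    rw [← this, RingHom.mem_ker.mp hx]
  rw [hπ0] at hπr
  have : x = (x - MonoidAlgebra.single 1 r) + MonoidAlgebra.single 1 r := by ring
  rw [this]
  exact I.add_mem hxr (hconst r hπr)
end

section
/- Let p be a prime, d ≥ 1, and let G = (ℤ/pℤ) × (ℤ/dℤ) with generators a (of order p) and b (of order d). Let c ∈ ℤ_p^× with c^d ≠ 1, and define the ℤ_p[G]-module map δ : ℤ_p[G]² → ℤ_p[G] by δ(z_1, z_2) = (c·b - 1)·z_1 + (a - 1)·z_2. Then ker δ is generated as a ℤ_p[G]-module by the two elements (0, 𝒯_a) and (a - 1, -(c·b - 1)), where 𝒯_a = ∑_{i=0}^{p-1} a^i. -/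
open MonoidAlgebra Multiplicative Finset

namespace Stmt17Aux

set_option linter.unusedSectionVars false

variable {p d : ℕ} [Fact p.Prime] [NeZero d]

local notation "A" => MonoidAlgebra ℤ_[p] (Multiplicative (ZMod p × ZMod d))

lemma sum_range_zmod {M : Type*} [AddCommMonoid M] (f : ZMod p → M) :
    ∑ i ∈ range p, f (i : ZMod p) = ∑ x : ZMod p, f x := by
  rw [← Fin.sum_univ_eq_sum_range (fun i => f (i : ZMod p)) p]
  refine Fintype.sum_bijective (fun i : Fin p => ((i : ℕ) : ZMod p)) ?_ _ _ (fun i => rfl)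
  refine (Fintype.bijective_iff_injective_and_card _).2 ⟨fun i j h => Fin.ext ?_, by simp⟩
  have := congrArg ZMod.val h
  rwa [ZMod.val_cast_of_lt i.2, ZMod.val_cast_of_lt j.2] at this

lemma apow (i : ℕ) :
    (Multiplicative.ofAdd ((1 : ZMod p), (0 : ZMod d))) ^ i = ofAdd ((i : ZMod p), 0) := by
  rw [← ofAdd_nsmul]; congr 1; simp [Prod.ext_iff]

noncomputable def TT (p d : ℕ) [Fact p.Prime] [NeZero d] :
    MonoidAlgebra ℤ_[p] (Multiplicative (ZMod p × ZMod d)) :=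
  ∑ x : ZMod p, single (ofAdd (x, (0 : ZMod d))) (1 : ℤ_[p])

noncomputable def aa (p d : ℕ) : Multiplicative (ZMod p × ZMod d) :=
  ofAdd ((1 : ZMod p), (0 : ZMod d))

noncomputable def bb (p d : ℕ) : Multiplicative (ZMod p × ZMod d) :=
  ofAdd ((0 : ZMod p), (1 : ZMod d))

noncomputable def α (p d : ℕ) [Fact p.Prime] [NeZero d] :
    MonoidAlgebra ℤ_[p] (Multiplicative (ZMod p × ZMod d)) :=
  single (aa p d) (1 : ℤ_[p]) - 1

noncomputable def β (p d : ℕ) [Fact p.Prime] [NeZero d] (c : ℤ_[p]) :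
    MonoidAlgebra ℤ_[p] (Multiplicative (ZMod p × ZMod d)) :=
  single (bb p d) c - 1

lemma Trange :
    ∑ i ∈ Finset.range p, MonoidAlgebra.single
      ((Multiplicative.ofAdd ((1 : ZMod p), (0 : ZMod d))) ^ i) (1 : ℤ_[p]) = TT p d := by
  simp_rw [apow]
  exact sum_range_zmod (fun x => single (ofAdd (x, (0:ZMod d))) (1:ℤ_[p]))

lemma TT_mul_apply (z : A) (u : ZMod p) (v : ZMod d) :
    (TT p d * z).coeff (ofAdd (u, v)) = ∑ x : ZMod p, z.coeff (ofAdd (x, v)) := by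
  rw [TT, sum_mul, coeff_sum, Finset.sum_apply']
  rw [show ∑ x : ZMod p, (single (ofAdd (x, (0:ZMod d))) (1:ℤ_[p]) * z).coeff (ofAdd (u, v))
      = ∑ x : ZMod p, z.coeff (ofAdd (u - x, v)) from Finset.sum_congr rfl fun x _ => by
    rw [coeff_single_mul_apply, one_mul, ← ofAdd_neg, ← ofAdd_add]
    norm_num [sub_eq_neg_add]]
  exact Fintype.sum_equiv (Equiv.subLeft u) _ _ (fun x => rfl)

lemma α_mul_apply (z : A) (x : ZMod p) (v : ZMod d) :
    (α p d * z).coeff (ofAdd (x, v)) = z.coeff (ofAdd (x - 1, v)) - z.coeff (ofAdd (x, v)) := by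
  rw [α, sub_mul, one_mul, coeff_sub, Finsupp.sub_apply, coeff_single_mul_apply, one_mul, aa,
    ← ofAdd_neg, ← ofAdd_add]
  norm_num [sub_eq_neg_add]

lemma TT_apply (x : ZMod p) (v : ZMod d) :
    (TT p d).coeff (ofAdd (x, v)) = if v = 0 then 1 else 0 := by
  rw [TT, coeff_sum, Finset.sum_apply']
  rcases eq_or_ne v 0 with hv | hv
  · subst hv
    simp [coeff_single, Finsupp.single_apply, ← ofAdd_zero]
  · simp only [coeff_single, Finsupp.single_apply]
    rw [Finset.sum_eq_zero, if_neg hv]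
    intro y _
    rw [if_neg]
    intro hEq
    have h2 : (y, (0 : ZMod d)) = (x, v) := ofAdd.injective hEq
    exact hv ((Prod.ext_iff.1 h2).2.symm)

lemma alpha_mul_TT : α p d * TT p d = 0 := by
  ext g
  have hg : g = ofAdd ((toAdd g).1, (toAdd g).2) := rfl
  rw [hg, α_mul_apply, TT_apply, TT_apply]
  simp

-- β is a non-zero-divisor
lemma beta_nzd (c : ℤ_[p]) (hc : c ^ d ≠ 1) (z : A) (h : β p d c * z = 0) : z = 0 := by
  have h1 : single (bb p d) c * z = z := by
    rw [β, sub_mul, one_mul, sub_eq_zero] at h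
    exact h
  have h2 : ∀ n : ℕ, (single (bb p d) c : A) ^ n * z = z := by
    intro n
    induction n with
    | zero => simp
    | succ n ih => rw [pow_succ, mul_assoc, h1, ih]
  have hbb : (bb p d) ^ d = 1 := by
    rw [bb, ← ofAdd_nsmul, ← ofAdd_zero]
    congr 1
    simp [Prod.ext_iff, nsmul_eq_mul, ZMod.natCast_self]
  have h3 := h2 d
  rw [single_pow, hbb] at h3
  ext g
  have h4 : (single (1 : Multiplicative (ZMod p × ZMod d)) (c ^ d) * z).coeff g = z.coeff g := by rw [h3]
  rw [coeff_single_mul_apply, inv_one, one_mul] at h4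
  have h5 : (c ^ d - 1) * z.coeff g = 0 := by rw [sub_mul, one_mul, h4, sub_self]
  rcases mul_eq_zero.mp h5 with h6 | h6
  · exact absurd h6 (sub_ne_zero.mpr hc)
  · simpa using h6


-- ker (α ·) ⊆ im (TT ·)
lemma ker_alpha (z : A) (h : α p d * z = 0) : ∃ s : A, z = TT p d * s := by
  have hz : ∀ (x : ZMod p) (v : ZMod d), z.coeff (ofAdd (x - 1, v)) = z.coeff (ofAdd (x, v)) := by
    intro x v
    have : (α p d * z).coeff (ofAdd (x, v)) = (0 : A).coeff (ofAdd (x, v)) := by rw [h]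
    rw [α_mul_apply] at this
    simpa [sub_eq_zero] using this
  have hconst : ∀ (x : ZMod p) (v : ZMod d), z.coeff (ofAdd (x, v)) = z.coeff (ofAdd (0, v)) := by
    have key : ∀ (n : ℕ) (x : ZMod p) (v : ZMod d),
        z.coeff (ofAdd (x - (n : ZMod p), v)) = z.coeff (ofAdd (x, v)) := by
      intro n
      induction n with
      | zero => intro x v; simp
      | succ n ih =>
        intro x v
        have step := hz (x - (n : ZMod p)) v
        rw [ih] at step
        rw [← step]
        congr 2
        push_cast
        ring
    intro x v
    have := key x.val x v
    rw [ZMod.natCast_zmod_val, sub_self] at this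
    exact this.symm
  classical
  refine ⟨ofCoeff (Finsupp.equivFunOnFinite.symm
    (fun g => if (toAdd g).1 = 0 then z.coeff (ofAdd (0, (toAdd g).2)) else 0)), ?_⟩
  ext g
  have hg : g = ofAdd ((toAdd g).1, (toAdd g).2) := rfl
  rw [hg, TT_mul_apply]
  simp only [coeff_ofCoeff, Finsupp.coe_equivFunOnFinite_symm, toAdd_ofAdd]
  rw [Finset.sum_ite_eq' Finset.univ (0 : ZMod p)
    (fun _ => z.coeff (ofAdd (0, (toAdd g).2)))]
  simp only [Finset.mem_univ, if_true]
  exact hconst (toAdd g).1 (toAdd g).2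

-- ker (TT ·) ⊆ im (α ·)
lemma ker_TT (z : A) (h : TT p d * z = 0) : ∃ w : A, z = α p d * w := by
  have hsum : ∀ v : ZMod d, ∑ x : ZMod p, z.coeff (ofAdd (x, v)) = 0 := by
    intro v
    have : (TT p d * z).coeff (ofAdd ((0 : ZMod p), v)) = (0 : A).coeff (ofAdd ((0 : ZMod p), v)) := by
      rw [h]
    rwa [TT_mul_apply] at this
  classical
  refine ⟨ofCoeff (Finsupp.equivFunOnFinite.symm
    (fun g => -∑ i ∈ range (toAdd g).1.val,
      z.coeff (ofAdd ((i : ZMod p) + 1, (toAdd g).2)))), ?_⟩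
  ext g
  have hg : g = ofAdd ((toAdd g).1, (toAdd g).2) := rfl
  set u := (toAdd g).1 with hu
  set v := (toAdd g).2 with hv
  rw [hg, α_mul_apply]
  simp only [coeff_ofCoeff, Finsupp.coe_equivFunOnFinite_symm, toAdd_ofAdd]
  have hp1 : 1 < p := (Fact.out : p.Prime).one_lt
  rcases eq_or_ne u 0 with h0 | h0
  · have hval0 : ((0 : ZMod p) - 1).val = p - 1 := by
      have heq : (0 : ZMod p) - 1 = ((p - 1 : ℕ) : ZMod p) := by
        rw [Nat.cast_sub (by omega : 1 ≤ p), ZMod.natCast_self, Nat.cast_one]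
      rw [heq, ZMod.val_cast_of_lt (by omega)]
    rw [h0, hval0, ZMod.val_zero]
    simp only [range_zero, Finset.sum_empty, neg_zero, sub_zero]
    have htot := hsum v
    rw [← sum_range_zmod (fun x => z.coeff (ofAdd (x, v)))] at htot
    have hsplit := Finset.sum_range_succ' (fun i => z.coeff (ofAdd ((i : ZMod p), v))) (p - 1)
    rw [Nat.sub_add_cancel (by omega : 1 ≤ p)] at hsplit
    rw [hsplit] at htot
    push_cast at htot ⊢
    linear_combination htot
  · set k := u.val with hk
    have hk1 : 1 ≤ k := by
      rcases Nat.eq_zero_or_pos k with h' | h'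
      · exact absurd (by rw [← ZMod.natCast_zmod_val u, ← hk, h', Nat.cast_zero]) h0
      · exact h'
    have hklt : k < p := ZMod.val_lt u
    have hval1 : (u - 1).val = k - 1 := by
      have : u - 1 = ((k - 1 : ℕ) : ZMod p) := by
        rw [← ZMod.natCast_zmod_val u, ← hk]
        push_cast [Nat.cast_sub hk1]
        ring
      rw [this, ZMod.val_cast_of_lt (by omega)]
    rw [hval1]
    have hsplit := Finset.sum_range_succ
      (fun i => z.coeff (ofAdd ((i : ZMod p) + 1, v))) (k - 1)
    rw [Nat.sub_add_cancel (by omega : 1 ≤ k)] at hsplit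
    rw [hsplit]
    have hcast : ((k - 1 : ℕ) : ZMod p) + 1 = u := by
      rw [← ZMod.natCast_zmod_val u, ← hk]
      push_cast [Nat.cast_sub hk1]
      ring
    rw [hcast]
    ring

end Stmt17Aux


/-- Over `G = ℤ/pℤ × ℤ/dℤ` with generators `a, b` and `c ∈ ℤ_pˣ` with `c^d ≠ 1`, the
kernel of `δ(z₁, z₂) = (c·b - 1)z₁ + (a - 1)z₂` is generated as a `ℤ_p[G]`-module by
`(0, 𝒯_a)` and `(a - 1, -(c·b - 1))`, where `𝒯_a = ∑_{i<p} a^i`. -/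
theorem stmt_17 (p : ℕ) [Fact p.Prime] (d : ℕ) (hd : 1 ≤ d)
    (c : ℤ_[p]ˣ) (hc : (c : ℤ_[p]) ^ d ≠ 1)
    (δ : (MonoidAlgebra ℤ_[p] (Multiplicative (ZMod p × ZMod d)) ×
          MonoidAlgebra ℤ_[p] (Multiplicative (ZMod p × ZMod d)))
        →ₗ[MonoidAlgebra ℤ_[p] (Multiplicative (ZMod p × ZMod d))]
          MonoidAlgebra ℤ_[p] (Multiplicative (ZMod p × ZMod d)))
    (hδ : ∀ z, δ z =
      (MonoidAlgebra.single (Multiplicative.ofAdd ((0 : ZMod p), (1 : ZMod d)))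
          ((c : ℤ_[p])) - 1) * z.1
      + (MonoidAlgebra.single (Multiplicative.ofAdd ((1 : ZMod p), (0 : ZMod d)))
          (1 : ℤ_[p]) - 1) * z.2) :
    LinearMap.ker δ = Submodule.span
      (MonoidAlgebra ℤ_[p] (Multiplicative (ZMod p × ZMod d)))
      {(0, ∑ i ∈ Finset.range p,
          MonoidAlgebra.single
            ((Multiplicative.ofAdd ((1 : ZMod p), (0 : ZMod d))) ^ i) (1 : ℤ_[p])),
       (MonoidAlgebra.single (Multiplicative.ofAdd ((1 : ZMod p), (0 : ZMod d)))
          (1 : ℤ_[p]) - 1,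
        -(MonoidAlgebra.single (Multiplicative.ofAdd ((0 : ZMod p), (1 : ZMod d)))
            ((c : ℤ_[p])) - 1))} := by
  haveI : NeZero d := ⟨by omega⟩
  have hβ : (MonoidAlgebra.single (Multiplicative.ofAdd ((0 : ZMod p), (1 : ZMod d)))
      ((c : ℤ_[p])) - 1) = Stmt17Aux.β p d (c : ℤ_[p]) := rfl
  have hα : (MonoidAlgebra.single (Multiplicative.ofAdd ((1 : ZMod p), (0 : ZMod d)))
      (1 : ℤ_[p]) - 1) = Stmt17Aux.α p d := rfl
  rw [Stmt17Aux.Trange, hβ, hα]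
  apply le_antisymm
  · intro z hz
    rw [LinearMap.mem_ker, hδ, hβ, hα] at hz
    have h1 : Stmt17Aux.β p d (c : ℤ_[p]) * (Stmt17Aux.TT p d * z.1) = 0 := by
      have h2 : Stmt17Aux.TT p d * (Stmt17Aux.β p d (c : ℤ_[p]) * z.1 + Stmt17Aux.α p d * z.2)
          = Stmt17Aux.TT p d * 0 := by rw [hz]
      have h3 : Stmt17Aux.TT p d * (Stmt17Aux.α p d * z.2) = (Stmt17Aux.α p d * Stmt17Aux.TT p d) * z.2 := by
        ring
      rw [mul_zero, mul_add, h3, Stmt17Aux.alpha_mul_TT, zero_mul, add_zero] at h2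
      linear_combination h2
    have h4 : Stmt17Aux.TT p d * z.1 = 0 := Stmt17Aux.beta_nzd (c : ℤ_[p]) hc _ h1
    obtain ⟨w, hw⟩ := Stmt17Aux.ker_TT z.1 h4
    have h5 : Stmt17Aux.α p d * (Stmt17Aux.β p d (c : ℤ_[p]) * w + z.2) = 0 := by
      have : Stmt17Aux.α p d * (Stmt17Aux.β p d (c : ℤ_[p]) * w + z.2)
          = Stmt17Aux.β p d (c : ℤ_[p]) * z.1 + Stmt17Aux.α p d * z.2 := by
        rw [hw]; ring
      rw [this, hz]
    obtain ⟨s, hs⟩ := Stmt17Aux.ker_alpha _ h5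
    refine Submodule.mem_span_pair.mpr ⟨s, w, ?_⟩
    have hfst : (s • ((0 : MonoidAlgebra ℤ_[p] (Multiplicative (ZMod p × ZMod d))), Stmt17Aux.TT p d)
        + w • (Stmt17Aux.α p d, -Stmt17Aux.β p d (c : ℤ_[p]))).1 = z.1 := by
      simp only [Prod.fst_add, Prod.smul_fst, smul_eq_mul, mul_zero, zero_add]
      linear_combination -hw
    have hsnd : (s • ((0 : MonoidAlgebra ℤ_[p] (Multiplicative (ZMod p × ZMod d))), Stmt17Aux.TT p d)
        + w • (Stmt17Aux.α p d, -Stmt17Aux.β p d (c : ℤ_[p]))).2 = z.2 := by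
      simp only [Prod.snd_add, Prod.smul_snd, smul_eq_mul]
      linear_combination -hs
    exact Prod.ext hfst hsnd
  · rw [Submodule.span_le]
    rintro x hx
    simp only [Set.mem_insert_iff, Set.mem_singleton_iff] at hx
    rcases hx with rfl | rfl
    · rw [SetLike.mem_coe, LinearMap.mem_ker, hδ, hβ, hα]
      simp only [mul_zero, zero_add]
      exact Stmt17Aux.alpha_mul_TT
    · rw [SetLike.mem_coe, LinearMap.mem_ker, hδ, hβ, hα]
      ring
end

section
/- Let p be an odd prime and let 𝓕 be the Lubin–Tate formal group law over ℤ_p associated to π = up with u ∈ ℤ_p^×, whose logarithm is log_𝓕(X) = ∑_{j=0}^∞ X^{p^j}/π^j. Let N be a finite extension of ℚ_p with normalized valuation v_N satisfying v_N(p) = p (i.e., absolute ramification index p). Then for every x ∈ N with v_N(x) = 1, the series log_𝓕(x) converges and v_N(log_𝓕(x)) = 0. -/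
open Multiplicative Filter

-- arithmetic helper: for p ≥ 3 and j ≥ 2, j*(p+1) ≤ p^j
private lemma aux_pow (p : ℕ) (hp : 3 ≤ p) : ∀ j, 2 ≤ j → j * (p + 1) ≤ p ^ j := by
  intro j hj
  induction j with
  | zero => omega
  | succ n ih =>
    rcases Nat.lt_or_ge n 2 with h | h
    · interval_cases n
      · omega
      · -- j = 2 : 2*(p+1) ≤ p^2
        have : 2 * (p + 1) ≤ p * p := by nlinarith
        simpa [pow_succ, pow_one] using this
    · have h1 := ih h
      have hn1 : n + 1 ≤ p * n := by
        calc n + 1 ≤ 3 * n := by omega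
          _ ≤ p * n := Nat.mul_le_mul_right n hp
      have : (n + 1) * (p + 1) ≤ p * (n * (p + 1)) := by
        calc (n + 1) * (p + 1) ≤ (p * n) * (p + 1) := Nat.mul_le_mul_right _ hn1
          _ = p * (n * (p + 1)) := by ring
      calc (n + 1) * (p + 1) ≤ p * (n * (p + 1)) := this
        _ ≤ p * p ^ n := Nat.mul_le_mul_left p h1
        _ = p ^ (n + 1) := by ring

private lemma aux_coe_pow (a : ℤ) (n : ℕ) :
    ((ofAdd a : Multiplicative ℤ) : WithZero (Multiplicative ℤ)) ^ n
      = ((ofAdd ((n : ℤ) * a) : Multiplicative ℤ) : WithZero (Multiplicative ℤ)) := by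
  rw [← WithZero.coe_pow, ← ofAdd_nsmul, nsmul_eq_mul]

-- closedness of closed balls in a valued field
private lemma aux_isClosed {K : Type*} [Field K] {Γ₀ : Type*}
    [LinearOrderedCommGroupWithZero Γ₀] [Valued K Γ₀] (γ : Γ₀) (hγ : γ ≠ 0) :
    IsClosed { y : K | Valued.v y ≤ γ } := by
  rw [← isOpen_compl_iff]
  rw [isOpen_iff_mem_nhds]
  intro y hy
  simp only [Set.mem_compl_iff, Set.mem_setOf_eq, not_le] at hy
  rw [Valued.mem_nhds]
  have h0 : Valued.v y ≠ 0 := by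
    intro h
    rw [h] at hy
    exact hγ (le_antisymm hy.le zero_le')
  refine ⟨Units.mk0 (Valued.v.restrict y) (by simpa [Valuation.restrict_def, MonoidWithZeroHom.ValueGroup₀.restrict₀_eq_zero_iff] using h0), fun z hz => ?_⟩
  simp only [Set.mem_setOf_eq, Units.val_mk0, Valuation.restrict_lt_iff] at hz
  have : Valued.v z = Valued.v y := by
    have := Valued.v.map_add_eq_of_lt_left (x := y) (y := z - y) (by simpa using hz)
    simpa using this
  simp only [Set.mem_compl_iff, Set.mem_setOf_eq, not_le, this]
  exact hy

/-- For the Lubin–Tate logarithm `log_𝓕(X) = ∑_j X^{p^j}/π^j` with `π = u·p` (`u ∈ ℤ_pˣ`),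
over a finite extension `N/ℚ_p` (with its valuation, normalized additively, satisfying
`v_N(p) = p`, i.e. absolute ramification index `p`): for any `x ∈ N` with `v_N(x) = 1`
the series `∑_j x^{p^j}/π^j` converges and its sum has valuation `0`. -/
theorem stmt_19 (p : ℕ) [Fact p.Prime] (hp2 : p ≠ 2) (u : ℤ_[p]ˣ)
    (N : Type*) [Field N] [Valued N (WithZero (Multiplicative ℤ))] [CompleteSpace N]
    [Algebra ℚ_[p] N] [FiniteDimensional ℚ_[p] N]
    (hvp : Valued.v (algebraMap ℚ_[p] N (p : ℚ_[p]))
      = (Multiplicative.ofAdd (-(p : ℤ)) : Multiplicative ℤ))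
    (hvu : Valued.v (algebraMap ℚ_[p] N (((u : ℤ_[p]) : ℚ_[p]))) = 1)
    (π : N) (hπ : π = algebraMap ℚ_[p] N (((u : ℤ_[p]) : ℚ_[p]) * (p : ℚ_[p])))
    (x : N) (hx : Valued.v x = (Multiplicative.ofAdd (-1 : ℤ) : Multiplicative ℤ)) :
    ∃ L : N, HasSum (fun j : ℕ => x ^ (p ^ j) / π ^ j) L ∧ Valued.v L = 1 := by
  have hp : 3 ≤ p := by
    have := (Fact.out : p.Prime).two_le
    rcases Nat.lt_or_ge p 3 with h | h
    · omega
    · exact h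
  set f : ℕ → N := fun j => x ^ (p ^ j) / π ^ j with hf
  have vπ : Valued.v π = ((ofAdd (-(p : ℤ)) : Multiplicative ℤ) : WithZero (Multiplicative ℤ)) := by
    rw [hπ, map_mul, map_mul, hvu, hvp, one_mul]
  -- valuation of each term
  have vf : ∀ j : ℕ, Valued.v (f j)
      = ((ofAdd ((j : ℤ) * p - p ^ j) : Multiplicative ℤ) : WithZero (Multiplicative ℤ)) := by
    intro j
    have : Valued.v (f j) = Valued.v x ^ (p ^ j) / Valued.v π ^ j := by
      simp [hf, map_div₀, map_pow]
    rw [this, hx, vπ, aux_coe_pow, aux_coe_pow, ← WithZero.coe_div, ← ofAdd_sub]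
    push_cast
    ring_nf
  -- terms tend to zero
  have htend : Tendsto f cofinite (nhds 0) := by
    rw [Nat.cofinite_eq_atTop]
    rw [(Valued.hasBasis_nhds_zero N (WithZero (Multiplicative ℤ))).tendsto_right_iff]
    intro γ _
    obtain ⟨m, hm⟩ : ∃ m : ℤ, (MonoidWithZeroHom.ValueGroup₀.embedding γ.1 : WithZero (Multiplicative ℤ)) = (ofAdd m : Multiplicative ℤ) := by
      obtain ⟨g, hg⟩ := WithZero.ne_zero_iff_exists.mp ((map_ne_zero _).mpr γ.ne_zero : (MonoidWithZeroHom.ValueGroup₀.embedding γ.1 : WithZero (Multiplicative ℤ)) ≠ 0)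
      exact ⟨g.toAdd, by simp [← hg]⟩
    filter_upwards [eventually_ge_atTop (m.natAbs + 2)] with j hj
    simp only [Set.mem_setOf_eq, Valuation.restrict_lt_iff_lt_embedding, vf j, hm, WithZero.coe_lt_coe, Multiplicative.ofAdd_lt]
    have h1 : j * (p + 1) ≤ p ^ j := aux_pow p hp j (by omega)
    have h2 : (j : ℤ) * (p + 1) ≤ (p : ℤ) ^ j := by exact_mod_cast h1
    have h3 : -(m.natAbs : ℤ) ≤ m := by
      rcases Int.natAbs_eq m with h | h <;> omega
    have h4 : (m.natAbs : ℤ) + 2 ≤ (j : ℤ) := by exact_mod_cast hj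
    nlinarith
  have hsummable : Summable f := by
    rw [summable_iff_vanishing]
    intro e he
    obtain ⟨γ, hγ⟩ := Valued.mem_nhds_zero.mp he
    rw [Nat.cofinite_eq_atTop] at htend
    have : ∀ᶠ j in Filter.atTop, Valued.v (f j) < (MonoidWithZeroHom.ValueGroup₀.embedding γ.1 : WithZero (Multiplicative ℤ)) := by
      have := htend.eventually (Valued.mem_nhds_zero.mpr ⟨γ, Set.Subset.rfl⟩ : _)
      simpa only [Set.mem_setOf_eq, Valuation.restrict_lt_iff_lt_embedding] using this
    obtain ⟨n, hn⟩ := Filter.eventually_atTop.mp this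
    refine ⟨Finset.range n, fun t ht => hγ ?_⟩
    refine (Valued.v.restrict_lt_iff_lt_embedding).mpr (Valued.v.map_sum_lt ((map_ne_zero _).mpr γ.ne_zero) fun j hj => ?_)
    refine hn j ?_
    by_contra hjn
    exact (Finset.disjoint_left.mp ht hj) (Finset.mem_range.mpr (by omega))
  refine ⟨∑' j, f j, hsummable.hasSum, ?_⟩
  -- split off first two terms
  have hsplit : ∑' j, f j = f 0 + (f 1 + ∑' j, f (j + 2)) := by
    rw [Summable.tsum_eq_zero_add hsummable]
    congr 1
    rw [Summable.tsum_eq_zero_add (by exact (summable_nat_add_iff 1).mpr hsummable)]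
  -- tail bound
  have htail : Valued.v (∑' j, f (j + 2))
      ≤ ((ofAdd (-2 : ℤ) : Multiplicative ℤ) : WithZero (Multiplicative ℤ)) := by
    set S := { y : N | Valued.v y ≤ ((ofAdd (-2 : ℤ) : Multiplicative ℤ) : WithZero (Multiplicative ℤ)) }
    have hclosed : IsClosed S := aux_isClosed _ (by simp)
    have hsum2 : Summable fun j => f (j + 2) := (summable_nat_add_iff 2).mpr hsummable
    have hmem : ∀ s : Finset ℕ, (∑ j ∈ s, f (j + 2)) ∈ S := by
      intro s
      simp only [S, Set.mem_setOf_eq]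
      refine Valued.v.map_sum_le fun j _ => ?_
      rw [vf (j + 2), WithZero.coe_le_coe, Multiplicative.ofAdd_le]
      have h1 : (j + 2) * (p + 1) ≤ p ^ (j + 2) := aux_pow p hp (j + 2) (by omega)
      have h2 : ((j : ℤ) + 2) * (p + 1) ≤ (p : ℤ) ^ (j + 2) := by exact_mod_cast h1
      push_cast
      nlinarith [Int.ofNat_nonneg j, (by exact_mod_cast hp : (3:ℤ) ≤ p)]
    exact hclosed.mem_of_tendsto hsum2.hasSum (Filter.Eventually.of_forall hmem)
  -- valuation of f 0 and f 1
  have v0 : Valued.v (f 0) = ((ofAdd (-1 : ℤ) : Multiplicative ℤ) : WithZero (Multiplicative ℤ)) := by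
    rw [vf 0]; norm_num
  have v1 : Valued.v (f 1) = 1 := by
    rw [vf 1]
    norm_num
  -- combine
  have vmain : Valued.v (f 1 + ∑' j, f (j + 2)) = 1 := by
    rw [Valued.v.map_add_eq_of_lt_left, v1]
    rw [v1]
    refine lt_of_le_of_lt htail ?_
    rw [show (1 : WithZero (Multiplicative ℤ)) = ((ofAdd (0:ℤ) : Multiplicative ℤ) : WithZero (Multiplicative ℤ)) by simp]
    rw [WithZero.coe_lt_coe, Multiplicative.ofAdd_lt]
    norm_num
  rw [hsplit, Valued.v.map_add_eq_of_lt_right, vmain]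
  rw [v0, vmain]
  rw [show (1 : WithZero (Multiplicative ℤ)) = ((ofAdd (0:ℤ) : Multiplicative ℤ) : WithZero (Multiplicative ℤ)) by simp]
  rw [WithZero.coe_lt_coe, Multiplicative.ofAdd_lt]
  norm_num
end
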